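/- Let L > 0, R ≥ 0, λ_m > 0, n_p > 0, and let J = [[0, −1], [1, 0]]. Let i : ℝ → ℝ², q : ℝ → ℝ, u : ℝ → ℝ² with i, q differentiable and u continuous, and define λ(t) := L i(t) + λ_m (cos(n_p q(t)), sin(n_p q(t))). Assume λ'(t) = −R i(t) + u(t) for all t ≥ 0, and let χ : ℝ → ℝ² be differentiable with χ'(t) = −R i(t) + u(t). Set θ := λ(0) − χ(0). Then for all t ≥ 0: i'(t) = (1/L) [ −R i(t) + u(t) − n_p q'(t) · J (χ(t) + θ − L i(t)) ]; in particular i'(t) is an affine function of θ with regressor matrix −(n_p q'(t)/L) J. -/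

import Mathlib

open Matrix Real

/-- **Dynamic linear regression form for the PMSM currents (equation (27) of the paper).**
With flux `λ(t) = L i(t) + λ_m (cos(n_p q(t)), sin(n_p q(t)))`, Faraday's law
`λ̇ = −R i + u`, dynamic extension `χ̇ = −R i + u`, and `θ := λ(0) − χ(0)`, one has for all
`t ≥ 0` that `i'(t) = (1/L)[−R i(t) + u(t) − n_p q̇(t) · J(χ(t) + θ − L i(t))]`,
where `J = [[0,−1],[1,0]]`; in particular `i'(t)` is affine in `θ` with regressor matrix
`−(n_p q̇(t)/L) J`. -/
theorem stmt11 (L R lm np : ℝ) (hL : 0 < L) (hR : 0 ≤ R) (hlm : 0 < lm) (hnp : 0 < np)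
    (J : Matrix (Fin 2) (Fin 2) ℝ) (hJ : J = !![0, -1; 1, 0])
    (i : ℝ → Fin 2 → ℝ) (q q' : ℝ → ℝ) (u : ℝ → Fin 2 → ℝ) (hu : Continuous u)
    (hq : ∀ t : ℝ, HasDerivAt q (q' t) t)
    (lam : ℝ → Fin 2 → ℝ)
    (hlam : ∀ t : ℝ,
      lam t = L • i t + lm • ![Real.cos (np * q t), Real.sin (np * q t)])
    (hfaraday : ∀ t : ℝ, 0 ≤ t → HasDerivAt lam (-R • i t + u t) t)
    (χ : ℝ → Fin 2 → ℝ)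
    (hχ : ∀ t : ℝ, HasDerivAt χ (-R • i t + u t) t)
    (θ : Fin 2 → ℝ) (hθ : θ = lam 0 - χ 0) :
    ∀ t : ℝ, 0 ≤ t →
      HasDerivAt i
        ((1 / L) • (-R • i t + u t - (np * q' t) • (J *ᵥ (χ t + θ - L • i t)))) t := by
  intro t ht
  set v : ℝ → Fin 2 → ℝ := fun s => ![Real.cos (np * q s), Real.sin (np * q s)] with hv
  set w : ℝ → Fin 2 → ℝ := fun s => (np * q' s) • ![-Real.sin (np * q s), Real.cos (np * q s)]
    with hw
  -- derivative of v
  have hvderiv : ∀ s : ℝ, HasDerivAt v (w s) s := by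
    intro s
    rw [hasDerivAt_pi]
    intro j
    have hqs : HasDerivAt (fun x => np * q x) (np * q' s) s := (hq s).const_mul np
    fin_cases j
    · have := hqs.cos
      refine this.congr_deriv ?_
      simp [hw]
      ring
    · have := hqs.sin
      refine this.congr_deriv ?_
      simp [hw]
      ring
  -- i as affine in lam
  have hi : i = fun s => (1 / L) • (lam s - lm • v s) := by
    funext s
    rw [hlam s]
    rw [add_sub_cancel_right, smul_smul, one_div, inv_mul_cancel₀ hL.ne', one_smul]
  -- lam - χ is constant on [0,∞)
  have hconst : lam t - χ t = θ := by
    have hderiv0 : ∀ s : ℝ, 0 ≤ s → HasDerivAt (fun x => lam x - χ x) 0 s := by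
      intro s hs
      have := (hfaraday s hs).sub (hχ s)
      rw [sub_self] at this
      exact this
    have hcont : ContinuousOn (fun x => lam x - χ x) (Set.Icc 0 t) := by
      intro x hx
      exact ((hderiv0 x hx.1).continuousAt).continuousWithinAt
    have := constant_of_has_deriv_right_zero hcont
      (fun x hx => ((hderiv0 x hx.1).hasDerivWithinAt)) t (Set.right_mem_Icc.mpr ht)
    rw [hθ]
    simpa using this
  -- the claimed derivative
  have hkey : (1 / L) • (-R • i t + u t - (np * q' t) • (J *ᵥ (χ t + θ - L • i t)))
      = (1 / L) • ((-R • i t + u t) - lm • w t) := by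
    have h1 : χ t + θ - L • i t = lm • v t := by
      have : χ t + θ = lam t := by
        rw [← hconst]; abel
      rw [this, hlam t]
      abel
    rw [h1, hJ]
    congr 1
    congr 1
    funext j
    fin_cases j <;>
      simp [Matrix.mulVec, dotProduct, hv, hw, Fin.sum_univ_two] <;> ring
  rw [hkey]
  have H : HasDerivAt (fun s => (1 / L) • (lam s - lm • v s))
      ((1 / L) • (-R • i t + u t - lm • w t)) t :=
    ((hfaraday t ht).sub ((hvderiv t).const_smul lm)).const_smul (1/L)
  exact H.congr_of_eventuallyEq (Filter.Eventually.of_forall fun s => by rw [hi])
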